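/- The language of Epstein formulas does not express the Epstein relation: it is not the case that for every R ⊆ FOR² and every pair (φ,ψ) there exists a formula χ such that (φ,ψ) ∈ R iff R ⊨ χ. In particular, no formula χ satisfies: for all R, R ⊨ χ iff (⊤,⊥) ∈ R. -/
import Mathlib


/-- Epstein formulas: letters, ¬, ∨, ∧, →, ↔, △ (tri), ↪ (hook). -/
inductive EFor : Type
  | var : ℕ → EFor
  | neg : EFor → EFor
  | or : EFor → EFor → EFor
  | and : EFor → EFor → EFor
  | imp : EFor → EFor → EFor
  | iff : EFor → EFor → EFor
  | tri : EFor → EFor → EFor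
  | hook : EFor → EFor → EFor
  deriving DecidableEq

/-- An Epstein model: a valuation of letters and a binary relation on formulas. -/
structure EModel : Type where
  v : ℕ → Prop
  R : Set (EFor × EFor)

/-- Epstein satisfaction. -/
def sat (M : EModel) : EFor → Prop
  | .var n => M.v n
  | .neg φ => ¬ sat M φ
  | .or φ ψ => sat M φ ∨ sat M ψ
  | .and φ ψ => sat M φ ∧ sat M ψ
  | .imp φ ψ => sat M φ → sat M ψ
  | .iff φ ψ => (sat M φ ↔ sat M ψ)
  | .tri φ ψ => (sat M φ ∧ sat M ψ) ∧ (φ, ψ) ∈ M.R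
  | .hook φ ψ => (sat M φ → sat M ψ) ∧ (φ, ψ) ∈ M.R

/-- The Omega set of a model. -/
def Omega (M : EModel) : Set (EFor × EFor) :=
  {p | ¬ sat M (.imp p.1 p.2)}

/-- The S-set of a model. -/
def Sset (M : EModel) : Set EModel :=
  {N | N.v = M.v ∧ M.R \ Omega M ⊆ N.R ∧ N.R ⊆ M.R ∪ Omega M}

/-- The theory of a model. -/
def Th (M : EModel) : Set EFor := {φ | sat M φ}

/-- Substitution: extend a map on letters homomorphically. -/
def esubst (σ : ℕ → EFor) : EFor → EFor
  | .var n => σ n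
  | .neg φ => .neg (esubst σ φ)
  | .or φ ψ => .or (esubst σ φ) (esubst σ ψ)
  | .and φ ψ => .and (esubst σ φ) (esubst σ ψ)
  | .imp φ ψ => .imp (esubst σ φ) (esubst σ ψ)
  | .iff φ ψ => .iff (esubst σ φ) (esubst σ ψ)
  | .tri φ ψ => .tri (esubst σ φ) (esubst σ ψ)
  | .hook φ ψ => .hook (esubst σ φ) (esubst σ ψ)

/-- A boolean homomorphism: any assignment respecting the boolean connectives
(no constraint on △, ↪, which are treated as atoms). -/
def BoolHom (w : EFor → Prop) : Prop :=
  (∀ φ, w (.neg φ) ↔ ¬ w φ) ∧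
  (∀ φ ψ, w (.or φ ψ) ↔ (w φ ∨ w ψ)) ∧
  (∀ φ ψ, w (.and φ ψ) ↔ (w φ ∧ w ψ)) ∧
  (∀ φ ψ, w (.imp φ ψ) ↔ (w φ → w ψ)) ∧
  (∀ φ ψ, w (.iff φ ψ) ↔ (w φ ↔ w ψ))

/-- Classical tautologies in the language of Epstein logic. -/
def Taut (φ : EFor) : Prop := ∀ w, BoolHom w → w φ

/-- The logic FΛ: least set containing CPL, the two Epstein axioms and Λ,
closed under uniform substitution and modus ponens. -/
inductive FLam (Λ : Set EFor) : EFor → Prop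
  | taut {φ} : Taut φ → FLam Λ φ
  | ax1 : FLam Λ (.imp (.hook (.var 0) (.var 1)) (.imp (.var 0) (.var 1)))
  | ax2 : FLam Λ (.iff (.tri (.var 0) (.var 1))
      (.and (.hook (.var 0) (.var 1)) (.and (.var 0) (.var 1))))
  | extra {φ} : φ ∈ Λ → FLam Λ φ
  | subst {φ} (σ : ℕ → EFor) : FLam Λ φ → FLam Λ (esubst σ φ)
  | mp {φ ψ} : FLam Λ (.imp φ ψ) → FLam Λ φ → FLam Λ ψ

/-- The base logic F. -/
def Fmem : EFor → Prop := FLam ∅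

/-- Hilbert derivability from premises Γ over a logic L. -/
inductive Deriv (L : EFor → Prop) (Γ : Set EFor) : EFor → Prop
  | thm {φ} : L φ → Deriv L Γ φ
  | prem {φ} : φ ∈ Γ → Deriv L Γ φ
  | mp {φ ψ} : Deriv L Γ (.imp φ ψ) → Deriv L Γ φ → Deriv L Γ ψ

/-- Validity on a relation: true in all models built over it. -/
def relSat (R : Set (EFor × EFor)) (φ : EFor) : Prop :=
  ∀ v : ℕ → Prop, sat ⟨v, R⟩ φ

def etop : EFor := .or (.var 0) (.neg (.var 0))
def ebot : EFor := .neg etop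

/-- the Epstein language does not express the relation; in
particular no formula expresses (⊤,⊥) ∈ R. -/
lemma sat_ebot_iff (M : EModel) : sat M ebot ↔ False := by
  simp [ebot, etop, sat]

lemma key (R R' : Set (EFor × EFor))
    (h : ∀ p : EFor × EFor, p ≠ (etop, ebot) → (p ∈ R ↔ p ∈ R'))
    (v : ℕ → Prop) : ∀ χ, sat ⟨v, R⟩ χ ↔ sat ⟨v, R'⟩ χ := by
  intro χ
  induction χ with
  | var n => simp [sat]
  | neg φ ih => simp [sat, ih]
  | or φ ψ ih1 ih2 => simp [sat, ih1, ih2]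
  | and φ ψ ih1 ih2 => simp [sat, ih1, ih2]
  | imp φ ψ ih1 ih2 => simp [sat, ih1, ih2]
  | iff φ ψ ih1 ih2 => simp [sat, ih1, ih2]
  | tri φ ψ ih1 ih2 =>
      by_cases hp : (φ, ψ) = (etop, ebot)
      · obtain ⟨h1, h2⟩ := Prod.mk.injEq .. ▸ hp
        subst h1; subst h2
        simp only [sat]
        have := sat_ebot_iff ⟨v, R⟩
        have := sat_ebot_iff ⟨v, R'⟩
        tauto
      · simp only [sat]; rw [ih1, ih2, h _ hp]
  | hook φ ψ ih1 ih2 =>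
      by_cases hp : (φ, ψ) = (etop, ebot)
      · obtain ⟨h1, h2⟩ := Prod.mk.injEq .. ▸ hp
        subst h1; subst h2
        simp only [sat]
        have := sat_ebot_iff ⟨v, R⟩
        have := sat_ebot_iff ⟨v, R'⟩
        have ht : sat ⟨v, R⟩ etop := by simp [etop, sat]; tauto
        have ht' : sat ⟨v, R'⟩ etop := by simp [etop, sat]; tauto
        tauto
      · simp only [sat]; rw [ih1, ih2, h _ hp]

lemma no_expr : ¬ ∃ χ : EFor, ∀ R : Set (EFor × EFor),
    (relSat R χ ↔ (etop, ebot) ∈ R) := by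
  rintro ⟨χ, hχ⟩
  have h1 : relSat {(etop, ebot)} χ := (hχ _).2 rfl
  have h2 : relSat (∅ : Set (EFor × EFor)) χ := by
    intro v
    rw [← key {(etop, ebot)} ∅ ?_ v χ]
    · exact h1 v
    · intro p hp
      simp only [Set.mem_singleton_iff, Set.mem_empty_iff_false]
      tauto
  exact ((hχ ∅).1 h2)

theorem stmt16 :
    (¬ ∀ φ ψ : EFor, ∃ χ : EFor, ∀ R : Set (EFor × EFor),
        ((φ, ψ) ∈ R ↔ relSat R χ)) ∧
    ¬ ∃ χ : EFor, ∀ R : Set (EFor × EFor),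
        (relSat R χ ↔ (etop, ebot) ∈ R) := by
  refine ⟨?_, no_expr⟩
  intro h
  obtain ⟨χ, hχ⟩ := h etop ebot
  exact no_expr ⟨χ, fun R => (hχ R).symm⟩
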